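/- arXiv:2011.14859 — 6 statements merged into one kernel-verified Lean document; each statement's English description precedes it below -/
import Mathlib

section
/- Let η₁ > 0 and η₂, η₃ ≥ 0 with η₁η₂ ≤ η₃. If (C_p*, C_q*, A*) is an optimal solution of the convex problem minimizing (1/2)‖X − X(C_p − C_q)‖_F² + (η₁/2)‖(C_p + C_q) − η₂A‖_F² + η₃‖C_p + C_q‖₁ over C_p, C_q nonnegative with zero diagonal and A doubly stochastic, then the supports of C_p* and C_q* are disjoint: there is no index (i,j) with both (C_p*)_{ij} > 0 and (C_q*)_{ij} > 0. -/
/-- The J-DSSC objective. -/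
noncomputable def jdsscObj {d n : ℕ} (X : Matrix (Fin d) (Fin n) ℝ)
    (η₁ η₂ η₃ : ℝ) (Cp Cq A : Matrix (Fin n) (Fin n) ℝ) : ℝ :=
  (1/2) * ∑ i, ∑ j, ((X - X * (Cp - Cq)) i j)^2
    + (η₁/2) * ∑ i, ∑ j, ((Cp + Cq - η₂ • A) i j)^2
    + η₃ * ∑ i, ∑ j, |(Cp + Cq) i j|

/-- Feasibility for J-DSSC: `Cp, Cq` nonnegative with zero diagonal, `A` doubly stochastic. -/
def jdsscFeas {n : ℕ} (Cp Cq A : Matrix (Fin n) (Fin n) ℝ) : Prop :=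
  (∀ i j, 0 ≤ Cp i j) ∧ (∀ i, Cp i i = 0) ∧
  (∀ i j, 0 ≤ Cq i j) ∧ (∀ i, Cq i i = 0) ∧
  (∀ i j, 0 ≤ A i j) ∧ (∀ i, ∑ j, A i j = 1) ∧ (∀ j, ∑ i, A i j = 1)

/-- Double sums of functions agreeing off one point differ by the values at that point. -/
lemma sum_update_point {n : ℕ} (i j : Fin n) (f f' : Fin n → Fin n → ℝ)
    (h : ∀ a b, ¬(a = i ∧ b = j) → f' a b = f a b) :
    ∑ a, ∑ b, f' a b = (∑ a, ∑ b, f a b) + (f' i j - f i j) := by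
  have key : ∑ a, ∑ b, (f' a b - f a b) = f' i j - f i j := by
    rw [Finset.sum_eq_single i]
    · rw [Finset.sum_eq_single j]
      · intro b _ hb
        rw [h i b (by tauto)]; ring
      · intro hj; exact absurd (Finset.mem_univ j) hj
    · intro a _ ha
      apply Finset.sum_eq_zero
      intro b _
      rw [h a b (by tauto)]; ring
    · intro hi; exact absurd (Finset.mem_univ i) hi
  have : ∑ a, ∑ b, (f' a b - f a b) = (∑ a, ∑ b, f' a b) - ∑ a, ∑ b, f a b := by
    simp [Finset.sum_sub_distrib]
  linarith [key, this]

/-- If `η₁ η₂ ≤ η₃`, any optimal solution of the J-DSSC relaxation has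
`Cp*` and `Cq*` with disjoint supports. -/
theorem jdssc_disjoint_supports {d n : ℕ} (X : Matrix (Fin d) (Fin n) ℝ)
    (η₁ η₂ η₃ : ℝ) (hη₁ : 0 < η₁) (hη₂ : 0 ≤ η₂) (hη₃ : 0 ≤ η₃)
    (hle : η₁ * η₂ ≤ η₃)
    (Cp Cq A : Matrix (Fin n) (Fin n) ℝ)
    (hfeas : jdsscFeas Cp Cq A)
    (hopt : ∀ Cp' Cq' A' : Matrix (Fin n) (Fin n) ℝ, jdsscFeas Cp' Cq' A' →
      jdsscObj X η₁ η₂ η₃ Cp Cq A ≤ jdsscObj X η₁ η₂ η₃ Cp' Cq' A') :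
    ¬ ∃ i j, 0 < Cp i j ∧ 0 < Cq i j := by
  rintro ⟨i, j, hp, hq⟩
  obtain ⟨hCp0, hCpd, hCq0, hCqd, hA0, hArow, hAcol⟩ := hfeas
  set m : ℝ := min (Cp i j) (Cq i j) with hm
  have hm0 : 0 < m := lt_min hp hq
  have hmp : m ≤ Cp i j := min_le_left _ _
  have hmq : m ≤ Cq i j := min_le_right _ _
  have hij : i ≠ j := by
    intro h; subst h; exact absurd (hCpd i) (by linarith)
  -- A i j ≤ 1
  have hA1 : A i j ≤ 1 := by
    have := Finset.single_le_sum (f := fun b => A i b) (fun b _ => hA0 i b)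
      (Finset.mem_univ j)
    rw [hArow i] at this; exact this
  -- perturbed matrices
  set Cp' : Matrix (Fin n) (Fin n) ℝ :=
    Matrix.of fun a b => if a = i ∧ b = j then Cp a b - m else Cp a b with hCp'
  set Cq' : Matrix (Fin n) (Fin n) ℝ :=
    Matrix.of fun a b => if a = i ∧ b = j then Cq a b - m else Cq a b with hCq'
  have hfeas' : jdsscFeas Cp' Cq' A := by
    refine ⟨?_, ?_, ?_, ?_, hA0, hArow, hAcol⟩
    · intro a b; simp only [hCp', Matrix.of_apply]
      split_ifs with h
      · obtain ⟨ha, hb⟩ := h; subst ha; subst hb; linarith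
      · exact hCp0 a b
    · intro a; simp only [hCp', Matrix.of_apply]
      split_ifs with h
      · obtain ⟨ha, hb⟩ := h; exact absurd (ha.symm.trans hb) hij
      · exact hCpd a
    · intro a b; simp only [hCq', Matrix.of_apply]
      split_ifs with h
      · obtain ⟨ha, hb⟩ := h; subst ha; subst hb; linarith
      · exact hCq0 a b
    · intro a; simp only [hCq', Matrix.of_apply]
      split_ifs with h
      · obtain ⟨ha, hb⟩ := h; exact absurd (ha.symm.trans hb) hij
      · exact hCqd a
  -- data term unchanged
  have hC : Cp' - Cq' = Cp - Cq := by
    ext a b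
    simp only [Matrix.sub_apply, hCp', hCq', Matrix.of_apply]
    split_ifs <;> ring
  -- second term
  have hT2 : ∑ a, ∑ b, ((Cp' + Cq' - η₂ • A) a b)^2
      = (∑ a, ∑ b, ((Cp + Cq - η₂ • A) a b)^2)
        + (((Cp i j + Cq i j - 2*m) - η₂ * A i j)^2
           - ((Cp i j + Cq i j) - η₂ * A i j)^2) := by
    have := sum_update_point i j
      (fun a b => ((Cp + Cq - η₂ • A) a b)^2)
      (fun a b => ((Cp' + Cq' - η₂ • A) a b)^2)
      (by
        intro a b hab
        simp only [Matrix.sub_apply, Matrix.add_apply, Matrix.smul_apply,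
          hCp', hCq', Matrix.of_apply, if_neg hab, smul_eq_mul])
    rw [this]
    congr 1
    simp only [Matrix.sub_apply, Matrix.add_apply, Matrix.smul_apply,
      hCp', hCq', Matrix.of_apply, smul_eq_mul]
    norm_num
    ring
  -- third term
  have hT3 : ∑ a, ∑ b, |(Cp' + Cq') a b|
      = (∑ a, ∑ b, |(Cp + Cq) a b|) + (-(2*m)) := by
    have := sum_update_point i j
      (fun a b => |(Cp + Cq) a b|)
      (fun a b => |(Cp' + Cq') a b|)
      (by
        intro a b hab
        simp only [Matrix.add_apply, hCp', hCq', Matrix.of_apply, if_neg hab])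
    rw [this]
    congr 1
    simp only [Matrix.add_apply, hCp', hCq', Matrix.of_apply]
    norm_num
    rw [abs_of_nonneg (by linarith), abs_of_nonneg (by linarith)]
    ring
  have hopt' := hopt Cp' Cq' A hfeas'
  rw [jdsscObj, jdsscObj, hC, hT2, hT3] at hopt'
  set s : ℝ := Cp i j + Cq i j with hs
  have hs2m : 2*m ≤ s := by rw [hs]; linarith
  set a : ℝ := η₂ * A i j with ha
  have ha0 : 0 ≤ a := mul_nonneg hη₂ (hA0 i j)
  have haη : a ≤ η₂ := by
    calc a = η₂ * A i j := rfl
    _ ≤ η₂ * 1 := by apply mul_le_mul_of_nonneg_left hA1 hη₂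
    _ = η₂ := by ring
  -- derive contradiction
  nlinarith [mul_pos hη₁ hm0, mul_nonneg hη₁.le (sub_nonneg.mpr haη),
    mul_pos hm0 hm0, mul_nonneg hm0.le (sub_nonneg.mpr haη),
    mul_nonneg hm0.le (sub_nonneg.mpr hs2m),
    mul_pos (mul_pos hη₁ hm0) hm0,
    mul_nonneg (mul_pos hη₁ hm0).le (sub_nonneg.mpr haη),
    mul_nonneg (mul_pos hη₁ hm0).le (sub_nonneg.mpr hs2m)]
end

section
/- Let η₁ > 0 and η₂, η₃ ≥ 0, and let (C_p*, C_q*, A*) be an optimal solution of the convex problem minimizing (1/2)‖X − X(C_p − C_q)‖_F² + (η₁/2)‖(C_p + C_q) − η₂A‖_F² + η₃‖C_p + C_q‖₁ subject to A ∈ Ω_n and C_p, C_q nonnegative with zero diagonal. Then at any index (i,j) where (C_p*)_{ij} > 0 and (C_q*)_{ij} > 0, it holds that max((C_p*)_{ij}, (C_q*)_{ij}) < (η₁η₂ − η₃)/η₁. -/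
lemma sum_sum_perturb {n : ℕ} (g g' : Fin n → Fin n → ℝ) (i j : Fin n)
    (h : ∀ a b, ¬(a = i ∧ b = j) → g' a b = g a b) :
    ∑ a, ∑ b, g' a b = (∑ a, ∑ b, g a b) + (g' i j - g i j) := by
  rw [← Fintype.sum_prod_type', ← Fintype.sum_prod_type']
  rw [← Finset.sum_erase_add _ _ (Finset.mem_univ (i, j)),
      ← Finset.sum_erase_add _ _ (Finset.mem_univ (i, j))]
  have : ∑ p ∈ Finset.univ.erase (i, j), g' p.1 p.2
      = ∑ p ∈ Finset.univ.erase (i, j), g p.1 p.2 := by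
    refine Finset.sum_congr rfl fun p hp => ?_
    have hne := Finset.ne_of_mem_erase hp
    exact h p.1 p.2 (fun ⟨h1, h2⟩ => hne (Prod.ext h1 h2))
  rw [this]; ring

/-- At any index where the supports of optimal `Cp*` and `Cq*` overlap, both entries
are bounded by `(η₁ η₂ - η₃)/η₁`. -/
theorem jdssc_overlap_bound {d n : ℕ} (X : Matrix (Fin d) (Fin n) ℝ)
    (η₁ η₂ η₃ : ℝ) (hη₁ : 0 < η₁) (hη₂ : 0 ≤ η₂) (hη₃ : 0 ≤ η₃)
    (Cp Cq A : Matrix (Fin n) (Fin n) ℝ)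
    (hfeas : jdsscFeas Cp Cq A)
    (hopt : ∀ Cp' Cq' A' : Matrix (Fin n) (Fin n) ℝ, jdsscFeas Cp' Cq' A' →
      jdsscObj X η₁ η₂ η₃ Cp Cq A ≤ jdsscObj X η₁ η₂ η₃ Cp' Cq' A') :
    ∀ i j, 0 < Cp i j → 0 < Cq i j →
      max (Cp i j) (Cq i j) < (η₁ * η₂ - η₃) / η₁ := by
  obtain ⟨hCp0, hCpd, hCq0, hCqd, hA0, hAr, hAc⟩ := hfeas
  intro i j hp hq
  have hij : i ≠ j := by
    intro h; subst h; exact absurd (hCpd i) (by linarith)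
  set s : ℝ := Cp i j + Cq i j with hs_def
  set a : ℝ := A i j with ha_def
  have ha0 : 0 ≤ a := hA0 i j
  have ha1 : a ≤ 1 := by
    have := hAr i
    calc a ≤ ∑ b, A i b := Finset.single_le_sum (fun b _ => hA0 i b) (Finset.mem_univ j)
    _ = 1 := this
  -- key perturbation inequality
  have key : ∀ ε : ℝ, 0 < ε → ε ≤ min (Cp i j) (Cq i j) →
      η₁ * s ≤ η₁ * η₂ * a + η₁ * ε - η₃ := by
    intro ε hε hεm
    have hεp : ε ≤ Cp i j := le_trans hεm (min_le_left _ _)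
    have hεq : ε ≤ Cq i j := le_trans hεm (min_le_right _ _)
    set Cp' : Matrix (Fin n) (Fin n) ℝ :=
      Matrix.of fun x y => Cp x y - if x = i ∧ y = j then ε else 0 with hCp'
    set Cq' : Matrix (Fin n) (Fin n) ℝ :=
      Matrix.of fun x y => Cq x y - if x = i ∧ y = j then ε else 0 with hCq'
    have hCp'app : ∀ x y, Cp' x y = Cp x y - if x = i ∧ y = j then ε else 0 := fun _ _ => rfl
    have hCq'app : ∀ x y, Cq' x y = Cq x y - if x = i ∧ y = j then ε else 0 := fun _ _ => rfl
    have feas' : jdsscFeas Cp' Cq' A := by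
      refine ⟨fun x y => ?_, fun x => ?_, fun x y => ?_, fun x => ?_, hA0, hAr, hAc⟩
      · rw [hCp'app]; by_cases h : x = i ∧ y = j
        · obtain ⟨h1, h2⟩ := h; subst h1; subst h2; simp; linarith
        · simp [h]; exact hCp0 x y
      · rw [hCp'app]; have : ¬(x = i ∧ x = j) := by rintro ⟨h1, h2⟩; exact hij (h1 ▸ h2 ▸ rfl)
        simp [this, hCpd x]
      · rw [hCq'app]; by_cases h : x = i ∧ y = j
        · obtain ⟨h1, h2⟩ := h; subst h1; subst h2; simp; linarith
        · simp [h]; exact hCq0 x y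
      · rw [hCq'app]; have : ¬(x = i ∧ x = j) := by rintro ⟨h1, h2⟩; exact hij (h1 ▸ h2 ▸ rfl)
        simp [this, hCqd x]
    have hle := hopt Cp' Cq' A feas'
    unfold jdsscObj at hle
    -- term 1 is unchanged
    have hsub : Cp' - Cq' = Cp - Cq := by
      ext x y
      simp only [Matrix.sub_apply, hCp'app, hCq'app]; ring
    rw [hsub] at hle
    -- term 2
    have h2 : (∑ x, ∑ y, ((Cp' + Cq' - η₂ • A) x y)^2)
        = (∑ x, ∑ y, ((Cp + Cq - η₂ • A) x y)^2)
          + ((s - 2*ε - η₂ * a)^2 - (s - η₂ * a)^2) := by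
      have := sum_sum_perturb (fun x y => ((Cp + Cq - η₂ • A) x y)^2)
        (fun x y => ((Cp' + Cq' - η₂ • A) x y)^2) i j (fun x y h => by
          simp only [Matrix.sub_apply, Matrix.add_apply, Matrix.smul_apply, hCp'app, hCq'app,
            if_neg h, smul_eq_mul]
          ring_nf)
      rw [this]
      congr 1
      have e1 : (Cp' + Cq' - η₂ • A) i j = s - 2*ε - η₂ * a := by
        simp only [Matrix.sub_apply, Matrix.add_apply, Matrix.smul_apply, hCp'app, hCq'app,
          smul_eq_mul, eq_self_iff_true, and_self, if_true]
        rw [hs_def, ha_def]; ring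
      have e2 : (Cp + Cq - η₂ • A) i j = s - η₂ * a := by
        simp only [Matrix.sub_apply, Matrix.add_apply, Matrix.smul_apply, smul_eq_mul,
          hs_def, ha_def]
      simp only [e1, e2]
    -- term 3
    have h3 : (∑ x, ∑ y, |(Cp' + Cq') x y|)
        = (∑ x, ∑ y, |(Cp + Cq) x y|) + (-(2*ε)) := by
      have := sum_sum_perturb (fun x y => |(Cp + Cq) x y|)
        (fun x y => |(Cp' + Cq') x y|) i j (fun x y h => by
          simp only [Matrix.add_apply, hCp'app, hCq'app, if_neg h]
          ring_nf)
      rw [this]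
      congr 1
      have e1 : (Cp' + Cq') i j = s - 2*ε := by
        simp only [Matrix.add_apply, hCp'app, hCq'app, eq_self_iff_true, and_self, if_true]
        rw [hs_def]; ring
      have e2 : (Cp + Cq) i j = s := by
        simp only [Matrix.add_apply, hs_def]
      have hs0 : (0:ℝ) ≤ s := by rw [hs_def]; linarith
      simp only [e1, e2]
      rw [abs_of_nonneg (by linarith : (0:ℝ) ≤ s - 2*ε), abs_of_nonneg hs0]
      ring
    rw [h2, h3] at hle
    have h0 : 0 ≤ η₁/2 * ((s - 2*ε - η₂*a)^2 - (s - η₂*a)^2) - η₃ * (2*ε) := by linarith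
    nlinarith [h0, hε, mul_pos hη₁ hε]
  -- from key, deduce the nonstrict bound on s
  have hmpos : 0 < min (Cp i j) (Cq i j) := lt_min hp hq
  have hsb : η₁ * s ≤ η₁ * η₂ - η₃ := by
    by_contra hcon
    push_neg at hcon
    set δ : ℝ := (η₁ * s - (η₁ * η₂ - η₃)) / η₁ with hδ
    have hδpos : 0 < δ := div_pos (by linarith) hη₁
    set ε : ℝ := min (min (Cp i j) (Cq i j)) (δ/2) with hε
    have hεpos : 0 < ε := lt_min hmpos (by linarith)
    have h1 := key ε hεpos (min_le_left _ _)
    have h2 : ε ≤ δ/2 := min_le_right _ _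
    have haη : η₁ * η₂ * a ≤ η₁ * η₂ := by
      nlinarith [mul_nonneg (mul_nonneg hη₁.le hη₂) (sub_nonneg.mpr ha1)]
    have hδeq : η₁ * δ = η₁ * s - (η₁ * η₂ - η₃) := by
      rw [hδ]; field_simp
    have h2' : η₁ * ε ≤ η₁ * (δ/2) := mul_le_mul_of_nonneg_left h2 hη₁.le
    linarith
  have hmax : max (Cp i j) (Cq i j) < s := max_lt (by linarith) (by linarith)
  have : s ≤ (η₁ * η₂ - η₃) / η₁ := by
    rw [le_div_iff₀ hη₁]; linarith [hsb]
  linarith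
end

section
/- For integers n ≥ k ≥ 3 with k < n/2, there exists a simple graph G on n vertices with minimum degree at least k such that no doubly stochastic matrix has its support (set of nonzero entries) contained in the support of the adjacency matrix of G. -/
/-- For `n ≥ k ≥ 3` with `k < n/2` there is a graph on `n` vertices with minimum
degree at least `k` whose support contains no doubly stochastic matrix. -/
theorem exists_graph_min_degree_no_doubly_stochastic (n k : ℕ)
    (hk3 : 3 ≤ k) (hkn : k ≤ n) (hhalf : 2 * k < n) :
    ∃ G : SimpleGraph (Fin n),
      (∀ v, k ≤ (G.neighborSet v).ncard) ∧
      ¬ ∃ A : Matrix (Fin n) (Fin n) ℝ,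
        (∀ i j, 0 ≤ A i j) ∧ (∀ i, ∑ j, A i j = 1) ∧ (∀ j, ∑ i, A i j = 1) ∧
        (∀ i j, A i j ≠ 0 → G.Adj i j) := by
  classical
  set G : SimpleGraph (Fin n) := SimpleGraph.fromRel (fun i j => (i : ℕ) < k) with hG
  have hadj : ∀ i j : Fin n, G.Adj i j ↔ i ≠ j ∧ ((i : ℕ) < k ∨ (j : ℕ) < k) := by
    intro i j; simp [hG, SimpleGraph.fromRel_adj]
  -- the set of "small" vertices
  have hsmall : ({w : Fin n | (w : ℕ) < k}).ncard = k := by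
    have himg : {w : Fin n | (w : ℕ) < k} = (Fin.castLE hkn) '' Set.univ := by
      ext w
      constructor
      · intro hw
        exact ⟨⟨(w : ℕ), hw⟩, trivial, by ext; simp⟩
      · rintro ⟨j, -, rfl⟩
        exact j.isLt
    rw [himg, Set.ncard_image_of_injective _ (Fin.castLE_injective hkn), Set.ncard_univ]
    simp
  refine ⟨G, ?_, ?_⟩
  · intro v
    by_cases hv : (v : ℕ) < k
    · have hsub : ({v}ᶜ : Set (Fin n)) ⊆ G.neighborSet v := by
        intro w hw
        rw [SimpleGraph.mem_neighborSet, hadj]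
        exact ⟨fun h => hw h.symm, Or.inl hv⟩
      have hle := Set.ncard_le_ncard hsub (Set.toFinite _)
      have hc := Set.ncard_add_ncard_compl ({v} : Set (Fin n))
      rw [Set.ncard_singleton] at hc
      simp [Nat.card_eq_fintype_card] at hc
      omega
    · have hsub : {w : Fin n | (w : ℕ) < k} ⊆ G.neighborSet v := by
        intro w hw
        rw [SimpleGraph.mem_neighborSet, hadj]
        refine ⟨fun h => hv (h ▸ hw), Or.inr hw⟩
      have hle := Set.ncard_le_ncard hsub (Set.toFinite _)
      omega
  · rintro ⟨A, hpos, hrow, hcol, hsupp⟩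
    set S : Finset (Fin n) := Finset.univ.filter (fun i => (i : ℕ) < k) with hS
    set B : Finset (Fin n) := Finset.univ.filter (fun i => ¬ (i : ℕ) < k) with hB
    have hScard : S.card = k := by
      have hco : (S : Set (Fin n)) = {w : Fin n | (w : ℕ) < k} := by
        ext w; simp [hS]
      rw [← Set.ncard_coe_finset, hco, hsmall]
    have hBcard : B.card = n - k := by
      have := Finset.card_filter_add_card_filter_not (s := Finset.univ)
        (p := fun i : Fin n => (i : ℕ) < k)
      simp only [Finset.card_univ, Fintype.card_fin] at this
      rw [← hS, ← hB] at this
      omega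
    -- entries with row in B vanish outside columns in S
    have hzero : ∀ i ∈ B, ∀ j ∉ S, A i j = 0 := by
      intro i hi j hj
      by_contra h
      have := (hadj i j).mp (hsupp i j h)
      simp [hS, hB] at hi hj
      rcases this.2 with h | h <;> omega
    have key : (B.card : ℝ) ≤ (S.card : ℝ) := by
      calc (B.card : ℝ) = ∑ i ∈ B, ∑ j, A i j := by
            rw [Finset.sum_congr rfl (fun i hi => hrow i)]; simp
        _ = ∑ i ∈ B, ∑ j ∈ S, A i j := by
            refine Finset.sum_congr rfl (fun i hi => ?_)
            exact (Finset.sum_subset (Finset.subset_univ S)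
              (fun j _ hj => hzero i hi j hj)).symm
        _ = ∑ j ∈ S, ∑ i ∈ B, A i j := Finset.sum_comm
        _ ≤ ∑ j ∈ S, ∑ i, A i j := by
            refine Finset.sum_le_sum (fun j hj => ?_)
            exact Finset.sum_le_sum_of_subset_of_nonneg (Finset.subset_univ B)
              (fun i _ _ => hpos i j)
        _ = (S.card : ℝ) := by
            rw [Finset.sum_congr rfl (fun j hj => hcol j)]; simp
    rw [hScard, hBcard] at key
    have : (n : ℝ) - (k : ℝ) ≤ (k : ℝ) := by
      have : ((n - k : ℕ) : ℝ) = (n : ℝ) - (k : ℝ) := by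
        push_cast [Nat.cast_sub hkn]; ring
      linarith [key, this ▸ key]
    have hn : (n : ℝ) ≤ 2 * k := by linarith
    have : n ≤ 2 * k := by exact_mod_cast hn
    omega
end

section
/- For integers n ≥ k ≥ 3 with k ≥ n/2, every simple graph on n vertices with minimum degree at least k contains in its support a doubly stochastic matrix; i.e., there exists a doubly stochastic matrix A with A_{ij} = 0 whenever {i,j} is not an edge of G. -/
open Finset

/-- For `n ≥ k ≥ 3` with `k ≥ n/2`, every graph on `n` vertices with minimum degree
at least `k` contains a doubly stochastic matrix in its support. -/
theorem min_degree_half_exists_doubly_stochastic (n k : ℕ)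
    (hk3 : 3 ≤ k) (hkn : k ≤ n) (hhalf : n ≤ 2 * k)
    (G : SimpleGraph (Fin n))
    (hdeg : ∀ v, k ≤ (G.neighborSet v).ncard) :
    ∃ A : Matrix (Fin n) (Fin n) ℝ,
      (∀ i j, 0 ≤ A i j) ∧ (∀ i, ∑ j, A i j = 1) ∧ (∀ j, ∑ i, A i j = 1) ∧
      (∀ i j, ¬ G.Adj i j → A i j = 0) := by
  classical
  have hdeg' : ∀ v, k ≤ G.degree v := by
    intro v
    have := hdeg v
    rwa [Set.ncard_eq_toFinset_card', ← SimpleGraph.neighborFinset_def,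
      ← SimpleGraph.degree] at this
  -- Hall's condition for the relation G.Adj
  have hall : ∀ A : Finset (Fin n), #A ≤ #{b | ∃ a ∈ A, G.Adj a b} := by
    intro S
    rcases S.eq_empty_or_nonempty with rfl | ⟨a, ha⟩
    · simp
    by_cases hS : #S ≤ k
    · refine hS.trans ?_
      refine le_trans (hdeg' a) (Finset.card_le_card ?_)
      intro b hb
      simp only [Finset.mem_filter, Finset.mem_univ, true_and]
      exact ⟨a, ha, (SimpleGraph.mem_neighborFinset G a b).1 hb⟩
    · push_neg at hS
      have huniv : ({b | ∃ a ∈ S, G.Adj a b} : Finset (Fin n)) = Finset.univ := by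
        refine Finset.eq_univ_of_forall fun b => ?_
        simp only [Finset.mem_filter, Finset.mem_univ, true_and]
        -- b's neighborhood cannot be contained in Sᶜ
        by_contra h
        push_neg at h
        have hsub : G.neighborFinset b ⊆ Sᶜ := by
          intro c hc
          rw [Finset.mem_compl]
          intro hcS
          exact h c hcS ((SimpleGraph.mem_neighborFinset G b c).1 hc).symm
        have h1 : k ≤ #(Sᶜ) := le_trans (hdeg' b) (Finset.card_le_card hsub)
        have h2 : #(Sᶜ) = n - #S := by
          rw [Finset.card_compl, Fintype.card_fin]
        omega
      rw [huniv, Finset.card_univ, Fintype.card_fin]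
      exact (Finset.card_le_card (Finset.subset_univ S)).trans
        (by rw [Finset.card_univ, Fintype.card_fin])
  obtain ⟨f, hf, hrel⟩ := (Fintype.all_card_le_filter_rel_iff_exists_injective G.Adj).1 (by convert hall)
  have hbij : Function.Bijective f := (Finite.injective_iff_bijective).1 hf
  let σ := Equiv.ofBijective f hbij
  refine ⟨fun i j => if f i = j then 1 else 0, ?_, ?_, ?_, ?_⟩
  · intro i j; dsimp only; split <;> norm_num
  · intro i; simp
  · intro j
    rw [Finset.sum_eq_single (σ.symm j)]
    · simp [σ, Equiv.ofBijective_apply_symm_apply]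
    · intro i _ hi
      have : f i ≠ j := fun h => hi (by simpa [σ] using congrArg σ.symm (h ▸ rfl : σ i = j))
      simp [this]
    · simp
  · intro i j hij
    have : f i ≠ j := fun h => hij (h ▸ hrel i)
    simp [this]
end

section
/- Strong duality for the doubly stochastic projection: for γ > 0 and M ∈ ℝ^{n×n}, min over A ∈ Ω_n of ⟨−M, A⟩ + (γ/2)‖A‖_F² equals max over α, β ∈ ℝⁿ of −1ᵀ(α + β) − (1/(2γ))‖[M − α1ᵀ − 1βᵀ]₊‖_F², where [·]₊ is entrywise positive part. -/
open Finset


lemma hasDerivAt_posPartSq (x : ℝ) : HasDerivAt (fun y : ℝ => max y 0 ^ 2) (2 * max x 0) x := by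
  rcases lt_trichotomy x 0 with hx | hx | hx
  · have h : (fun y : ℝ => max y 0 ^ 2) =ᶠ[nhds x] fun _ => (0:ℝ) := by
      filter_upwards [eventually_lt_nhds hx] with y hy
      simp [max_eq_right hy.le]
    rw [max_eq_right hx.le, mul_zero]
    exact (hasDerivAt_const x (0:ℝ)).congr_of_eventuallyEq h
  · subst hx
    rw [max_self, mul_zero]
    rw [hasDerivAt_iff_isLittleO]
    rw [Asymptotics.isLittleO_iff]
    intro c hc
    filter_upwards [Metric.eventually_nhds_iff.2 ⟨c, hc, fun {y} hy => hy⟩] with y hy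
    simp only [sub_zero, smul_zero, max_self, Real.norm_eq_abs, dist_zero_right,
      Real.norm_eq_abs] at hy ⊢
    have h1 : |max y 0 ^ 2 - 0 ^ 2| ≤ |y| * |y| := by
      rcases le_or_gt y 0 with h | h
      · simp [max_eq_right h]; exact mul_self_nonneg y
      · rw [max_eq_left h.le]
        simp [abs_of_nonneg (sq_nonneg y), sq, abs_of_pos h]
    calc |max y 0 ^ 2 - 0 ^ 2| ≤ |y| * |y| := h1
      _ ≤ c * |y| := by nlinarith [abs_nonneg y]
  · have h : (fun y : ℝ => max y 0 ^ 2) =ᶠ[nhds x] fun y => y ^ 2 := by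
      filter_upwards [eventually_gt_nhds hx] with y hy
      simp [max_eq_left hy.le]
    rw [max_eq_left hx.le]
    have h2 := hasDerivAt_pow 2 x
    norm_num at h2
    exact h2.congr_of_eventuallyEq h

noncomputable def hfun {n : ℕ} (γ : ℝ) (M : Matrix (Fin n) (Fin n) ℝ)
    (x : (Fin n → ℝ) × (Fin n → ℝ)) : ℝ :=
  (∑ i, (x.1 i + x.2 i)) + (1/(2*γ)) * ∑ i, ∑ j, max (M i j - x.1 i - x.2 j) 0 ^2

lemma le_of_sq_le' (A B E : ℝ) (hA : 0 ≤ A) (hB : 0 ≤ B) (hE : 0 ≤ E)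
    (h : E^2 ≤ A + B*E) : E ≤ A + B + 1 := by
  by_contra h'
  push_neg at h'
  have hE1 : (1:ℝ) < E := by linarith
  nlinarith [mul_lt_mul_of_pos_left h' (show (0:ℝ) < E by linarith)]

lemma neg_le_of_nmul (n : ℕ) (hn : 1 ≤ n) (x L : ℝ) (hL : 0 ≤ L) (h : -L ≤ (n:ℝ) * x) :
    -L ≤ x := by
  rcases le_or_gt 0 x with hx | hx
  · linarith
  · have hn' : (1:ℝ) ≤ (n:ℝ) := by exact_mod_cast hn
    nlinarith

lemma upper_via_sum {n : ℕ} (g : Fin n → ℝ) (L : ℝ) (hL : 0 ≤ L)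
    (hlow : ∀ k, -L ≤ g k) (i : Fin n) : g i ≤ (∑ k, g k) + n * L := by
  have h3 : (∑ k, g k) = g i + ∑ k ∈ Finset.univ \ {i}, g k :=
    Finset.sum_eq_add_sum_sdiff_singleton_of_mem (Finset.mem_univ i) g
  have h1 : ∑ k ∈ Finset.univ \ {i}, (-L) ≤ ∑ k ∈ Finset.univ \ {i}, g k :=
    Finset.sum_le_sum fun k _ => hlow k
  have h2 : ∑ k ∈ Finset.univ \ {i}, (-L) = -(((Finset.univ \ {i}).card : ℝ) * L) := by
    rw [Finset.sum_const, nsmul_eq_mul]; ring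
  have hcard : (((Finset.univ \ {i}).card : ℝ)) ≤ (n:ℝ) := by
    have := Finset.card_le_univ (Finset.univ \ {i})
    simp only [Finset.card_univ, Fintype.card_fin] at this
    exact_mod_cast this
  have h4 : -((n:ℝ) * L) ≤ ∑ k ∈ Finset.univ \ {i}, g k := by
    refine le_trans ?_ h1
    rw [h2, neg_le_neg_iff]
    exact mul_le_mul_of_nonneg_right hcard hL
  linarith [h3]

variable {n : ℕ}

lemma hfun_continuous (γ : ℝ) (M : Matrix (Fin n) (Fin n) ℝ) :
    Continuous (hfun γ M) := by
  unfold hfun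
  refine Continuous.add ?_ (Continuous.mul continuous_const ?_)
  · exact continuous_finset_sum _ fun i _ =>
      ((continuous_apply i).comp continuous_fst).add ((continuous_apply i).comp continuous_snd)
  · refine continuous_finset_sum _ fun i _ => continuous_finset_sum _ fun j _ => ?_
    refine Continuous.pow ?_ 2
    refine Continuous.max ?_ continuous_const
    exact (continuous_const.sub ((continuous_apply i).comp continuous_fst)).sub
      ((continuous_apply j).comp continuous_snd)

def Sbox (n : ℕ) (R : ℝ) : Set ((Fin n → ℝ) × (Fin n → ℝ)) :=
  {x | (∀ i, |x.1 i| ≤ R) ∧ (∀ i, |x.2 i| ≤ R) ∧ ∑ i, x.2 i = 0}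

lemma Sbox_closed (R : ℝ) : IsClosed (Sbox n R) := by
  have : Sbox n R = (⋂ i, {x : (Fin n → ℝ) × (Fin n → ℝ) | |x.1 i| ≤ R}) ∩
      ((⋂ i, {x | |x.2 i| ≤ R}) ∩ {x | ∑ i, x.2 i = 0}) := by
    ext x; simp [Sbox, forall_and]
  rw [this]
  refine IsClosed.inter ?_ (IsClosed.inter ?_ ?_)
  · exact isClosed_iInter fun i => isClosed_le (by fun_prop) continuous_const
  · exact isClosed_iInter fun i => isClosed_le (by fun_prop) continuous_const
  · exact isClosed_eq (by fun_prop) continuous_const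

lemma Sbox_compact (R : ℝ) : IsCompact (Sbox n R) := by
  have h1 : Sbox n R ⊆ (Set.univ.pi fun _ : Fin n => Set.Icc (-R) R) ×ˢ
      (Set.univ.pi fun _ : Fin n => Set.Icc (-R) R) := by
    rintro ⟨a, b⟩ ⟨ha, hb, -⟩
    constructor
    · intro i _; exact abs_le.1 (ha i)
    · intro i _; exact abs_le.1 (hb i)
  have h2 : IsCompact ((Set.univ.pi fun _ : Fin n => Set.Icc (-R) R) ×ˢ
      (Set.univ.pi fun _ : Fin n => Set.Icc (-R) R)) :=
    (isCompact_univ_pi fun _ => isCompact_Icc).prod (isCompact_univ_pi fun _ => isCompact_Icc)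
  exact h2.of_isClosed_subset (Sbox_closed R) h1

set_option maxHeartbeats 2000000 in
lemma coords_bound {n : ℕ} (hn : 1 ≤ n) (γ : ℝ) (hγ : 0 < γ)
    (M : Matrix (Fin n) (Fin n) ℝ) :
    ∃ B : ℝ, 0 ≤ B ∧ ∀ α β : Fin n → ℝ, (∑ i, β i = 0) →
      hfun γ M (α, β) ≤ hfun γ M (0, 0) → ∀ i, |α i| ≤ B ∧ |β i| ≤ B := by
  have hn' : (1:ℝ) ≤ (n:ℝ) := by exact_mod_cast hn
  have hn0 : (0:ℝ) ≤ (n:ℝ) := by positivity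
  have hγ2 : (0:ℝ) ≤ 2*γ := by linarith
  have h2γ : (0:ℝ) < 2*γ := by linarith
  set c : ℝ := ∑ i, ∑ j, |M i j| with hc_def
  clear_value c
  have hc0 : 0 ≤ c := by rw [hc_def]; positivity
  set m0 : ℝ := hfun γ M (0, 0) with hm0_def
  clear_value m0
  have hm00 : 0 ≤ m0 := by
    have h2 : (0:ℝ) < 1/(2*γ) := by rw [one_div]; exact inv_pos.2 h2γ
    have he2 : hfun (n := n) γ M (0, 0) = (1/(2*γ)) * ∑ i, ∑ j, max (M i j) 0 ^2 := by
      unfold hfun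
      simp
    rw [hm0_def, he2]
    exact mul_nonneg h2.le (by positivity)
  set K : ℝ := 2*γ*(n:ℝ)^2*(m0+c) + 2*γ*(n:ℝ) + 1 with hK_def
  clear_value K
  have hK0 : 0 ≤ K := by
    rw [hK_def]
    have h1 : (0:ℝ) ≤ 2*γ*(n:ℝ)^2*(m0+c) :=
      mul_nonneg (mul_nonneg hγ2 (by positivity)) (by linarith)
    have h2 : (0:ℝ) ≤ 2*γ*(n:ℝ) := mul_nonneg hγ2 hn0
    linarith
  have hcK : (0:ℝ) ≤ c + K := by linarith
  set B1 : ℝ := m0 + (n:ℝ)*(c+K) + (c+K) with hB1_def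
  clear_value B1
  have hncK : (0:ℝ) ≤ (n:ℝ)*(c+K) := mul_nonneg hn0 hcK
  have hB10 : 0 ≤ B1 := by rw [hB1_def]; linarith
  have hnB1 : (0:ℝ) ≤ (n:ℝ)*B1 := mul_nonneg hn0 hB10
  set Q : ℝ := 2*γ*(n:ℝ)*(m0 + (n:ℝ)*B1) with hQ_def
  clear_value Q
  have hQ0 : 0 ≤ Q := by
    rw [hQ_def]; exact mul_nonneg (mul_nonneg hγ2 hn0) (by linarith)
  set L2 : ℝ := c + (n:ℝ)*B1 + Q + 1 with hL2_def
  clear_value L2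
  have hL20 : 0 ≤ L2 := by rw [hL2_def]; linarith
  set B2 : ℝ := (n:ℝ)*L2 + L2 with hB2_def
  clear_value B2
  have hB20 : 0 ≤ B2 := by rw [hB2_def]; linarith [mul_nonneg hn0 hL20]
  refine ⟨max B1 B2, le_trans hB10 (le_max_left _ _), ?_⟩
  intro α β hβ0 hle i
  set y : Fin n → Fin n → ℝ := fun i j => max (M i j - α i - β j) 0 with hy_def
  have hy0 : ∀ i j, 0 ≤ y i j := fun i j => le_max_right _ _
  set P : ℝ := ∑ i, ∑ j, (y i j)^2 with hP_def
  have hP0 : 0 ≤ P := by rw [hP_def]; positivity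
  set s : ℝ := ∑ i, α i with hs_def
  have hval : hfun γ M (α, β) = s + (1/(2*γ)) * P := by
    have he : hfun γ M (α, β)
        = (∑ i, (α i + β i)) + (1/(2*γ)) * ∑ i, ∑ j, max (M i j - α i - β j) 0 ^2 := rfl
    rw [he, Finset.sum_add_distrib, hβ0, add_zero, hs_def, hP_def]
  have hle' : s + (1/(2*γ)) * P ≤ m0 := by rw [← hval]; exact hle
  have hP2 : P ≤ 2*γ*(m0 - s) := by
    have h1 : P / (2*γ) ≤ m0 - s := by
      have he : (1/(2*γ)) * P = P / (2*γ) := by ring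
      linarith [he ▸ hle']
    have := (div_le_iff₀ h2γ).1 h1
    linarith
  have hs_up : s ≤ m0 := by
    have h2 : (0:ℝ) < 1/(2*γ) := by rw [one_div]; exact inv_pos.2 h2γ
    nlinarith
  have hrowM : ∀ i, -c ≤ ∑ j, M i j := by
    intro i
    have h1 : |∑ j, M i j| ≤ ∑ j, |M i j| := Finset.abs_sum_le_sum_abs _ _
    have h2 : ∑ j, |M i j| ≤ c := by
      rw [hc_def]
      exact Finset.single_le_sum (f := fun i => ∑ j, |M i j|)
        (fun k _ => by positivity) (Finset.mem_univ i)
    exact (abs_le.1 (le_trans h1 h2)).1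
  have hcolM : ∀ j, -c ≤ ∑ i, M i j := by
    intro j
    have h1 : |∑ i, M i j| ≤ ∑ i, |M i j| := Finset.abs_sum_le_sum_abs _ _
    have h2 : ∑ i, |M i j| ≤ c := by
      rw [hc_def, Finset.sum_comm]
      exact Finset.single_le_sum (f := fun j => ∑ i, |M i j|)
        (fun k _ => by positivity) (Finset.mem_univ j)
    exact (abs_le.1 (le_trans h1 h2)).1
  have hsum_row : ∀ i, (∑ j, M i j) - (n:ℝ) * α i ≤ ∑ j, y i j := by
    intro i
    have h1 : ∑ j, (M i j - α i - β j) ≤ ∑ j, y i j :=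
      Finset.sum_le_sum fun j _ => le_max_left _ _
    have h2 : ∑ j, (M i j - α i - β j) = (∑ j, M i j) - (n:ℝ) * α i := by
      rw [Finset.sum_sub_distrib, Finset.sum_sub_distrib, hβ0, sub_zero,
        Finset.sum_const, Finset.card_univ, Fintype.card_fin, nsmul_eq_mul]
    linarith [h2 ▸ h1]
  set e : Fin n → ℝ := fun i => max (-c - (n:ℝ) * α i) 0 with he_def
  have he0 : ∀ i, 0 ≤ e i := fun i => le_max_right _ _
  have he_le : ∀ i, e i ≤ ∑ j, y i j := by
    intro i
    refine max_le ?_ (Finset.sum_nonneg fun j _ => hy0 i j)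
    linarith [hrowM i, hsum_row i]
  have hCS : ∀ (g : Fin n → ℝ), (∑ k, g k)^2 ≤ (n:ℝ) * ∑ k, (g k)^2 := by
    intro g
    have := sq_sum_le_card_mul_sum_sq (s := Finset.univ) (f := g)
    simpa [Finset.card_univ] using this
  have hesq : ∀ i, (e i)^2 ≤ (n:ℝ) * ∑ j, (y i j)^2 := by
    intro i
    have h1 : (e i)^2 ≤ (∑ j, y i j)^2 := pow_le_pow_left₀ (he0 i) (he_le i) 2
    exact le_trans h1 (hCS _)
  set E : ℝ := ∑ i, e i with hE_def
  have hE0 : 0 ≤ E := Finset.sum_nonneg fun i _ => he0 i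
  have hEP : E^2 ≤ (n:ℝ)^2 * P := by
    have h1 : E^2 ≤ (n:ℝ) * ∑ i, (e i)^2 := hCS e
    have h2 : ∑ i, (e i)^2 ≤ (n:ℝ) * P := by
      calc ∑ i, (e i)^2 ≤ ∑ i, (n:ℝ) * ∑ j, (y i j)^2 :=
            Finset.sum_le_sum fun i _ => hesq i
        _ = (n:ℝ) * P := by rw [hP_def, Finset.mul_sum]
    have h3 := mul_le_mul_of_nonneg_left h2 hn0
    calc E^2 ≤ (n:ℝ) * ∑ i, (e i)^2 := h1
      _ ≤ (n:ℝ) * ((n:ℝ) * P) := h3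
      _ = (n:ℝ)^2 * P := by ring
  have hsE : -(n:ℝ)*c - E ≤ (n:ℝ) * s := by
    have h1 : ∑ i, (-c - (n:ℝ) * α i) ≤ E :=
      Finset.sum_le_sum fun i _ => le_max_left _ _
    have h2 : ∑ i, (-c - (n:ℝ) * α i) = -(n:ℝ)*c - (n:ℝ)*s := by
      rw [Finset.sum_sub_distrib, Finset.sum_const, Finset.card_univ, Fintype.card_fin,
        nsmul_eq_mul, ← Finset.mul_sum, ← hs_def]
      ring
    linarith [h2 ▸ h1]
  have hE2 : E^2 ≤ 2*γ*(n:ℝ)^2*(m0+c) + 2*γ*(n:ℝ)*E := by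
    have h1 : (n:ℝ)^2 * P ≤ (n:ℝ)^2 * (2*γ*(m0 - s)) :=
      mul_le_mul_of_nonneg_left hP2 (by positivity)
    have h2 : 2*γ*(n:ℝ) * (-(n:ℝ)*c - E) ≤ 2*γ*(n:ℝ) * ((n:ℝ)*s) :=
      mul_le_mul_of_nonneg_left hsE (mul_nonneg hγ2 hn0)
    linarith [hEP]
  have hEK : E ≤ K := by
    have := le_of_sq_le' (2*γ*(n:ℝ)^2*(m0+c)) (2*γ*(n:ℝ)) E
      (mul_nonneg (mul_nonneg hγ2 (by positivity)) (by linarith))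
      (mul_nonneg hγ2 hn0) hE0 hE2
    rw [hK_def]; linarith
  have hαlow : ∀ k, -(c+K) ≤ α k := by
    intro k
    have h1 : e k ≤ E := Finset.single_le_sum (fun i _ => he0 i) (Finset.mem_univ k)
    have h2 : -c - (n:ℝ) * α k ≤ e k := le_max_left _ _
    refine neg_le_of_nmul n hn _ _ hcK ?_
    linarith
  have hαup : ∀ k, α k ≤ m0 + (n:ℝ)*(c+K) := by
    intro k
    have := upper_via_sum α (c+K) hcK hαlow k
    rw [← hs_def] at this
    linarith
  have hα_abs : ∀ k, |α k| ≤ B1 := by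
    intro k
    refine abs_le.2 ⟨?_, ?_⟩
    · rw [hB1_def]; linarith [hαlow k]
    · rw [hB1_def]; linarith [hαup k]
  have hs_low : -((n:ℝ)*B1) ≤ s := by
    have h1 : ∑ k, (-B1) ≤ ∑ k, α k :=
      Finset.sum_le_sum fun k _ => by linarith [(abs_le.1 (hα_abs k)).1]
    rw [Finset.sum_const, Finset.card_univ, Fintype.card_fin, nsmul_eq_mul] at h1
    rw [hs_def]; linarith
  have hsum_col : ∀ j, (∑ i, M i j) - s - (n:ℝ)*β j ≤ ∑ i, y i j := by
    intro j
    have h1 : ∑ i, (M i j - α i - β j) ≤ ∑ i, y i j :=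
      Finset.sum_le_sum fun i _ => le_max_left _ _
    have h2 : ∑ i, (M i j - α i - β j) = (∑ i, M i j) - s - (n:ℝ)*β j := by
      rw [Finset.sum_sub_distrib, Finset.sum_sub_distrib, ← hs_def,
        Finset.sum_const, Finset.card_univ, Fintype.card_fin, nsmul_eq_mul]
    linarith [h2 ▸ h1]
  set f : Fin n → ℝ := fun j => max (-c - (n:ℝ)*B1 - (n:ℝ)*β j) 0 with hf_def
  have hf0 : ∀ j, 0 ≤ f j := fun j => le_max_right _ _
  have hf_le : ∀ j, f j ≤ ∑ i, y i j := by
    intro j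
    refine max_le ?_ (Finset.sum_nonneg fun i _ => hy0 i j)
    have hsB : s ≤ (n:ℝ)*B1 := by
      have hB1m0 : m0 ≤ B1 := by rw [hB1_def]; linarith
      nlinarith [mul_nonneg (by linarith : (0:ℝ) ≤ (n:ℝ)-1) hB10]
    linarith [hcolM j, hsum_col j]
  have hcolP : ∀ j, ∑ i, (y i j)^2 ≤ P := by
    intro j
    have hPc : P = ∑ j, ∑ i, (y i j)^2 := by rw [hP_def]; exact Finset.sum_comm
    rw [hPc]
    exact Finset.single_le_sum (f := fun j => ∑ i, (y i j)^2)
      (fun k _ => by positivity) (Finset.mem_univ j)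
  have hfQ : ∀ j, (f j)^2 ≤ Q := by
    intro j
    have h1 : (f j)^2 ≤ (∑ i, y i j)^2 := pow_le_pow_left₀ (hf0 j) (hf_le j) 2
    have h2 : (∑ i, y i j)^2 ≤ (n:ℝ) * ∑ i, (y i j)^2 := hCS _
    have h3 : (n:ℝ) * ∑ i, (y i j)^2 ≤ (n:ℝ) * P :=
      mul_le_mul_of_nonneg_left (hcolP j) hn0
    have h4 : (n:ℝ) * P ≤ (n:ℝ) * (2*γ*(m0 - s)) :=
      mul_le_mul_of_nonneg_left hP2 hn0
    have h5 : 2*γ*(n:ℝ)*(m0 - s) ≤ Q := by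
      have h6 : m0 - s ≤ m0 + (n:ℝ)*B1 := by linarith [hs_low]
      have h7 := mul_le_mul_of_nonneg_left h6 (mul_nonneg hγ2 hn0)
      rw [hQ_def]; linarith
    nlinarith
  have hfup : ∀ j, f j ≤ Q + 1 := by
    intro j
    have := le_of_sq_le' Q 0 (f j) hQ0 le_rfl (hf0 j) (by linarith [hfQ j])
    linarith
  have hβlow : ∀ j, -L2 ≤ β j := by
    intro j
    have h1 : -c - (n:ℝ)*B1 - (n:ℝ)*β j ≤ f j := le_max_left _ _
    refine neg_le_of_nmul n hn _ _ hL20 ?_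
    rw [hL2_def]
    linarith [hfup j]
  have hβup : ∀ j, β j ≤ (n:ℝ)*L2 := by
    intro j
    have := upper_via_sum β L2 hL20 hβlow j
    rw [hβ0] at this
    linarith
  have hβ_abs : ∀ j, |β j| ≤ B2 := by
    intro j
    refine abs_le.2 ⟨?_, ?_⟩
    · rw [hB2_def]
      linarith [hβlow j, mul_nonneg hn0 hL20]
    · rw [hB2_def]; linarith [hβup j, hL20]
  exact ⟨le_trans (hα_abs i) (le_max_left _ _), le_trans (hβ_abs i) (le_max_right _ _)⟩

lemma sum_comp_update' {n : ℕ} (s : Finset (Fin n)) {i : Fin n} (hi : i ∈ s)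
    (F : Fin n → ℝ → ℝ) (g : Fin n → ℝ) (t : ℝ) :
    ∑ k ∈ s, F k (Function.update g i t k)
      = F i t + ∑ k ∈ s \ {i}, F k (g k) := by
  have h : ∀ k ∈ s, F k (Function.update g i t k)
      = Function.update (fun k => F k (g k)) i (F i t) k := by
    intro k _
    rcases eq_or_ne k i with rfl | hk
    · simp
    · simp [Function.update_of_ne hk]
  rw [Finset.sum_congr rfl h]
  exact Finset.sum_update_of_mem hi _ _

lemma exists_kkt {n : ℕ} (hn : 1 ≤ n) (γ : ℝ) (hγ : 0 < γ)
    (M : Matrix (Fin n) (Fin n) ℝ) :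
    ∃ α β : Fin n → ℝ,
      (∀ i, ∑ j, max (M i j - α i - β j) 0 = γ) ∧
      (∀ j, ∑ i, max (M i j - α i - β j) 0 = γ) := by
  obtain ⟨B, hB0, hB⟩ := coords_bound hn γ hγ M
  set R : ℝ := B + 1 with hR_def
  have hR0 : 0 ≤ R := by linarith
  have h0mem : ((0, 0) : (Fin n → ℝ) × (Fin n → ℝ)) ∈ Sbox n R := by
    refine ⟨fun i => by simpa using hR0, fun i => by simpa using hR0, by simp⟩
  obtain ⟨x, hxmem, hxmin⟩ := (Sbox_compact R).exists_isMinOn ⟨(0,0), h0mem⟩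
    (hfun_continuous γ M).continuousOn
  obtain ⟨α, β⟩ := x
  obtain ⟨hx1, hx2, hxsum⟩ := hxmem
  simp only at hx1 hx2 hxsum
  have hle : hfun γ M (α, β) ≤ hfun γ M (0, 0) := hxmin h0mem
  have hbnd := hB α β hxsum hle
  have hαR : ∀ i, |α i| < R := fun i => lt_of_le_of_lt (hbnd i).1 (by linarith)
  have hβR : ∀ i, |β i| < R := fun i => lt_of_le_of_lt (hbnd i).2 (by linarith)
  have hrowsum : ∀ i, ∑ j, max (M i j - α i - β j) 0 = γ := by
    intro i
    set φ : ℝ → ℝ := fun t => t + (1/(2*γ)) * ∑ j, max (M i j - t - β j) 0 ^2 with hφ_def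
    have key : ∀ t, hfun γ M (Function.update α i t, β)
        = φ t + ((β i + ∑ k ∈ Finset.univ \ {i}, (α k + β k))
          + (1/(2*γ)) * ∑ k ∈ Finset.univ \ {i}, ∑ j, max (M k j - α k - β j) 0 ^2) := by
      intro t
      have e1 : (∑ k, (Function.update α i t k + β k))
          = (t + β i) + ∑ k ∈ Finset.univ \ {i}, (α k + β k) :=
        sum_comp_update' Finset.univ (Finset.mem_univ i) (fun k u => u + β k) α t
      have e2 : (∑ k, ∑ j, max (M k j - Function.update α i t k - β j) 0 ^2)
          = (∑ j, max (M i j - t - β j) 0 ^2)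
            + ∑ k ∈ Finset.univ \ {i}, ∑ j, max (M k j - α k - β j) 0 ^2 :=
        sum_comp_update' Finset.univ (Finset.mem_univ i)
          (fun k u => ∑ j, max (M k j - u - β j) 0 ^2) α t
      show (∑ k, (Function.update α i t k + β k)) + (1/(2*γ)) *
          (∑ k, ∑ j, max (M k j - Function.update α i t k - β j) 0 ^2) = _
      rw [e1, e2, hφ_def]
      ring
    have hlocal : IsLocalMin φ (α i) := by
      have hεpos : 0 < R - |α i| := by linarith [hαR i]
      rw [IsLocalMin, IsMinFilter]
      filter_upwards [Metric.eventually_nhds_iff.2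
        ⟨R - |α i|, hεpos, fun {t} ht => ht⟩] with t ht
      have htR : |t| ≤ R := by
        have h1 : |t - α i| < R - |α i| := by simpa [Real.dist_eq] using ht
        have := abs_sub_abs_le_abs_sub t (α i)
        linarith
      have hmem2 : (Function.update α i t, β) ∈ Sbox n R := by
        refine ⟨fun k => ?_, hx2, hxsum⟩
        rcases eq_or_ne k i with rfl | hk
        · simpa using htR
        · simpa [Function.update_of_ne hk] using hx1 k
      have h2 : hfun γ M (α, β) ≤ hfun γ M (Function.update α i t, β) := hxmin hmem2
      have h3 : hfun γ M (α, β) = hfun γ M (Function.update α i (α i), β) := by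
        rw [Function.update_eq_self]
      rw [h3, key (α i), key t] at h2
      exact (add_le_add_iff_right _).1 h2
    have hderiv : HasDerivAt φ
        (1 + (1/(2*γ)) * ∑ j, (2 * max (M i j - α i - β j) 0 * (-1))) (α i) := by
      rw [hφ_def]
      refine (hasDerivAt_id (α i)).add (HasDerivAt.const_mul _ ?_)
      refine HasDerivAt.fun_sum fun j _ => ?_
      have hin : HasDerivAt (fun t : ℝ => M i j - t - β j) (-1) (α i) := by
        simpa using ((hasDerivAt_id (α i)).const_sub (M i j)).sub_const (β j)
      have hout := hasDerivAt_posPartSq (M i j - α i - β j)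
      exact hout.comp (α i) hin
    have hzero := hlocal.hasDerivAt_eq_zero hderiv
    -- derive sum = γ
    have hγ' : γ ≠ 0 := ne_of_gt hγ
    have hsum2 : ∑ j, (2 * max (M i j - α i - β j) 0 * (-1))
        = -2 * ∑ j, max (M i j - α i - β j) 0 := by
      rw [Finset.mul_sum]
      exact Finset.sum_congr rfl fun j _ => by ring
    rw [hsum2] at hzero
    have h2γ : (2*γ) ≠ 0 := by positivity
    field_simp at hzero
    linarith
  have hpair : ∀ j k : Fin n, j ≠ k →
      (∑ i, max (M i j - α i - β j) 0) = ∑ i, max (M i k - α i - β k) 0 := by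
    intro j k hjk
    have hjmem : j ∈ Finset.univ \ {k} := by simp [hjk]
    set β' : ℝ → (Fin n → ℝ) := fun t =>
      Function.update (Function.update β j (β j + t)) k (β k - t) with hβ'_def
    have hsplit : ∀ (G : Fin n → ℝ → ℝ) (t : ℝ), (∑ m, G m (β' t m))
        = G k (β k - t) + G j (β j + t) + ∑ m ∈ (Finset.univ \ {k}) \ {j}, G m (β m) := by
      intro G t
      have h1 := sum_comp_update' Finset.univ (Finset.mem_univ k) G
        (Function.update β j (β j + t)) (β k - t)
      have h2 := sum_comp_update' (Finset.univ \ {k}) hjmem G β (β j + t)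
      rw [hβ'_def]
      show (∑ m, G m (Function.update (Function.update β j (β j + t)) k (β k - t) m)) = _
      rw [h1, h2]
      ring
    have hβsplit : (∑ m, β m) = β k + β j + ∑ m ∈ (Finset.univ \ {k}) \ {j}, β m := by
      rw [Finset.sum_eq_add_sum_sdiff_singleton_of_mem (Finset.mem_univ k) β,
        Finset.sum_eq_add_sum_sdiff_singleton_of_mem hjmem β]
      ring
    have hsum0 : ∀ t, (∑ m, β' t m) = 0 := by
      intro t
      have h1 := hsplit (fun _ u => u) t
      rw [h1]
      rw [hβsplit] at hxsum
      linarith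
    set ψ : ℝ → ℝ := fun t => (1/(2*γ)) * ((∑ i, max (M i j - α i - (β j + t)) 0 ^2)
      + ∑ i, max (M i k - α i - (β k - t)) 0 ^2) with hψ_def
    have key2 : ∀ t, hfun γ M (α, β' t) = ψ t + ((∑ m, α m)
        + (1/(2*γ)) * ∑ m ∈ (Finset.univ \ {k}) \ {j}, ∑ i, max (M i m - α i - β m) 0 ^2) := by
      intro t
      have e1 : (∑ m, (α m + β' t m)) = ∑ m, α m := by
        rw [Finset.sum_add_distrib, hsum0 t, add_zero]
      have e2 : (∑ i, ∑ m, max (M i m - α i - β' t m) 0 ^2)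
          = ∑ m, ∑ i, max (M i m - α i - β' t m) 0 ^2 := Finset.sum_comm
      have e3 := hsplit (fun m u => ∑ i, max (M i m - α i - u) 0 ^2) t
      show (∑ m, (α m + β' t m)) + (1/(2*γ)) *
          (∑ i, ∑ m, max (M i m - α i - β' t m) 0 ^2) = _
      rw [e1, e2, e3, hψ_def]
      ring
    have hβ'0 : β' 0 = β := by
      rw [hβ'_def]
      simp [Function.update_eq_self]
    have hlocal2 : IsLocalMin ψ 0 := by
      rw [IsLocalMin, IsMinFilter]
      filter_upwards [Metric.eventually_nhds_iff.2
        ⟨1, one_pos, fun {t} ht => ht⟩] with t ht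
      have ht1 : |t| ≤ 1 := by
        simpa [Real.dist_eq] using ht.le
      have hmem2 : (α, β' t) ∈ Sbox n R := by
        refine ⟨hx1, fun m => ?_, hsum0 t⟩
        show |β' t m| ≤ R
        simp only [hβ'_def]
        rcases eq_or_ne m k with rfl | hmk
        · simp only [Function.update_self]
          have h1 : |β m - t| ≤ |β m| + |t| := by
            rw [sub_eq_add_neg]
            exact (abs_add_le _ _).trans (by rw [abs_neg])
          have := (hbnd m).2
          rw [hR_def]; linarith
        · rw [Function.update_of_ne hmk]
          rcases eq_or_ne m j with rfl | hmj
          · simp only [Function.update_self]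
            have h1 : |β m + t| ≤ |β m| + |t| := abs_add_le _ _
            have := (hbnd m).2
            rw [hR_def]; linarith
          · rw [Function.update_of_ne hmj]
            exact hx2 m
      have h2 : hfun γ M (α, β) ≤ hfun γ M (α, β' t) := hxmin hmem2
      have h3 : hfun γ M (α, β) = hfun γ M (α, β' 0) := by rw [hβ'0]
      rw [h3, key2 0, key2 t] at h2
      exact (add_le_add_iff_right _).1 h2
    have hderiv2 : HasDerivAt ψ
        ((1/(2*γ)) * ((∑ i, 2 * max (M i j - α i - (β j + 0)) 0 * (-1))
          + ∑ i, 2 * max (M i k - α i - (β k - 0)) 0 * 1)) 0 := by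
      rw [hψ_def]
      refine HasDerivAt.const_mul _ (HasDerivAt.add ?_ ?_)
      · refine HasDerivAt.fun_sum fun i _ => ?_
        have hin : HasDerivAt (fun t : ℝ => M i j - α i - (β j + t)) (-1) 0 := by
          simpa using ((hasDerivAt_id (0:ℝ)).const_add (β j)).const_sub (M i j - α i)
        exact (hasDerivAt_posPartSq (M i j - α i - (β j + 0))).comp 0 hin
      · refine HasDerivAt.fun_sum fun i _ => ?_
        have hin : HasDerivAt (fun t : ℝ => M i k - α i - (β k - t)) 1 0 := by
          simpa using ((hasDerivAt_id (0:ℝ)).const_sub (β k)).const_sub (M i k - α i)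
        exact (hasDerivAt_posPartSq (M i k - α i - (β k - 0))).comp 0 hin
    have hzero2 := hlocal2.hasDerivAt_eq_zero hderiv2
    simp only [add_zero, sub_zero] at hzero2
    have hs1 : (∑ i, 2 * max (M i j - α i - β j) 0 * (-1))
        = -2 * ∑ i, max (M i j - α i - β j) 0 := by
      rw [Finset.mul_sum]
      exact Finset.sum_congr rfl fun i _ => by ring
    have hs2 : (∑ i, 2 * max (M i k - α i - β k) 0 * 1)
        = 2 * ∑ i, max (M i k - α i - β k) 0 := by
      rw [Finset.mul_sum]
      exact Finset.sum_congr rfl fun i _ => by ring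
    rw [hs1, hs2] at hzero2
    have h2γ : (2*γ) ≠ 0 := by positivity
    field_simp at hzero2
    linarith
  refine ⟨α, β, hrowsum, ?_⟩
  intro j
  have hnpos : (0:ℝ) < (n:ℝ) := by exact_mod_cast hn
  have htot : (∑ i, ∑ j', max (M i j' - α i - β j') 0) = (n:ℝ)*γ := by
    calc (∑ i, ∑ j', max (M i j' - α i - β j') 0)
        = ∑ i : Fin n, γ := Finset.sum_congr rfl fun i _ => hrowsum i
      _ = (n:ℝ)*γ := by
          rw [Finset.sum_const, Finset.card_univ, Fintype.card_fin, nsmul_eq_mul]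
  have htot2 : (∑ j', ∑ i, max (M i j' - α i - β j') 0) = (n:ℝ)*γ := by
    rw [Finset.sum_comm]; exact htot
  have hall : ∀ j' ∈ Finset.univ, (∑ i, max (M i j' - α i - β j') 0)
      = ∑ i, max (M i j - α i - β j) 0 := by
    intro j' _
    rcases eq_or_ne j' j with rfl | hne
    · rfl
    · exact hpair j' j hne
  rw [Finset.sum_congr rfl hall, Finset.sum_const, Finset.card_univ, Fintype.card_fin,
    nsmul_eq_mul] at htot2
  exact mul_left_cancel₀ (ne_of_gt hnpos) htot2

lemma entry_ineq (γ : ℝ) (hγ : 0 < γ) (c a : ℝ) (ha : 0 ≤ a) :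
    0 ≤ -c * a + γ/2 * a^2 + (1/(2*γ)) * max c 0 ^2 := by
  rcases le_or_gt c 0 with h | h
  · rw [max_eq_right h]
    nlinarith
  · rw [max_eq_left h.le]
    have h2 : 0 ≤ (γ * a - c)^2 / (2*γ) := by positivity
    have he : (γ * a - c)^2 / (2*γ) = -c * a + γ/2 * a^2 + (1/(2*γ)) * c ^2 := by
      field_simp
      ring
    linarith [he ▸ h2]

lemma entry_eq (γ : ℝ) (hγ : 0 < γ) (c : ℝ) :
    -c * (max c 0 / γ) + γ/2 * (max c 0 / γ)^2 + (1/(2*γ)) * max c 0 ^2 = 0 := by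
  have hγ' : γ ≠ 0 := ne_of_gt hγ
  rcases le_or_gt c 0 with h | h
  · simp [max_eq_right h]
  · rw [max_eq_left h.le]
    field_simp
    ring

/-- A matrix is doubly stochastic. -/
def IsDoublyStochastic {n : ℕ} (A : Matrix (Fin n) (Fin n) ℝ) : Prop :=
  (∀ i j, 0 ≤ A i j) ∧ (∀ i, ∑ j, A i j = 1) ∧ (∀ j, ∑ i, A i j = 1)

lemma sums_rewrite {n : ℕ} (γ : ℝ) (M : Matrix (Fin n) (Fin n) ℝ)
    (A : Matrix (Fin n) (Fin n) ℝ) (hA : IsDoublyStochastic A) (α β : Fin n → ℝ) :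
    ∑ i, ∑ j, (-(M i j - α i - β j) * A i j + γ/2 * (A i j)^2
        + (1/(2*γ)) * max (M i j - α i - β j) 0 ^2)
      = ((∑ i, ∑ j, (-(M i j)) * A i j) + (γ/2) * ∑ i, ∑ j, (A i j)^2)
        - ((-(∑ i, (α i + β i))) - (1/(2*γ)) * ∑ i, ∑ j, (max (M i j - α i - β j) 0)^2) := by
  obtain ⟨hpos, hrow, hcol⟩ := hA
  have hα : ∑ i, α i = ∑ i, ∑ j, α i * A i j := by
    refine Finset.sum_congr rfl fun i _ => ?_
    rw [← Finset.mul_sum, hrow i, mul_one]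
  have hβ : ∑ i, β i = ∑ i, ∑ j, β j * A i j := by
    rw [Finset.sum_comm (t := Finset.univ) (s := Finset.univ)
      (f := fun i j => β j * A i j)]
    refine Finset.sum_congr rfl fun j _ => ?_
    rw [← Finset.mul_sum, hcol j, mul_one]
  have hstep : ∀ i j, -(M i j - α i - β j) * A i j + γ/2 * (A i j)^2
        + (1/(2*γ)) * max (M i j - α i - β j) 0 ^2
      = (-(M i j)) * A i j + γ/2 * (A i j)^2 + α i * A i j + β j * A i j
        + (1/(2*γ)) * max (M i j - α i - β j) 0 ^2 := by
    intro i j; ring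
  simp only [hstep, Finset.sum_add_distrib]
  simp only [Finset.mul_sum, Finset.sum_add_distrib]
  linarith [hα, hβ]

/-- Strong duality for the quadratically regularized doubly stochastic projection:
the primal minimum equals the dual maximum. -/
theorem reg_projection_strong_duality (n : ℕ) (hn : 1 ≤ n) (γ : ℝ) (hγ : 0 < γ)
    (M : Matrix (Fin n) (Fin n) ℝ) :
    ∃ v : ℝ,
      IsLeast {t : ℝ | ∃ A : Matrix (Fin n) (Fin n) ℝ, IsDoublyStochastic A ∧
        t = (∑ i, ∑ j, (-(M i j)) * A i j) + (γ/2) * ∑ i, ∑ j, (A i j)^2} v ∧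
      IsGreatest {t : ℝ | ∃ α β : Fin n → ℝ,
        t = (-(∑ i, (α i + β i)))
            - (1/(2*γ)) * ∑ i, ∑ j, (max (M i j - α i - β j) 0)^2} v := by
  obtain ⟨α, β, hrow, hcol⟩ := exists_kkt hn γ hγ M
  have hγ' : γ ≠ 0 := ne_of_gt hγ
  set A : Matrix (Fin n) (Fin n) ℝ := fun i j => max (M i j - α i - β j) 0 / γ with hA_def
  have hA : IsDoublyStochastic A := by
    refine ⟨fun i j => div_nonneg (le_max_right _ _) hγ.le, fun i => ?_, fun j => ?_⟩
    · show (∑ j, max (M i j - α i - β j) 0 / γ) = 1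
      rw [← Finset.sum_div, hrow i, div_self hγ']
    · show (∑ i, max (M i j - α i - β j) 0 / γ) = 1
      rw [← Finset.sum_div, hcol j, div_self hγ']
  set v : ℝ := (-(∑ i, (α i + β i)))
      - (1/(2*γ)) * ∑ i, ∑ j, (max (M i j - α i - β j) 0)^2 with hv_def
  have hmain : ((∑ i, ∑ j, (-(M i j)) * A i j) + (γ/2) * ∑ i, ∑ j, (A i j)^2) = v := by
    have h0 : ∑ i, ∑ j, (-(M i j - α i - β j) * A i j + γ/2 * (A i j)^2
        + (1/(2*γ)) * max (M i j - α i - β j) 0 ^2) = 0 := by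
      refine Finset.sum_eq_zero fun i _ => Finset.sum_eq_zero fun j _ => ?_
      exact entry_eq γ hγ (M i j - α i - β j)
    have h1 := sums_rewrite γ M A hA α β
    rw [h0] at h1
    rw [hv_def]
    linarith
  refine ⟨v, ⟨⟨A, hA, hmain.symm⟩, ?_⟩, ⟨⟨α, β, hv_def⟩, ?_⟩⟩
  · rintro t ⟨A', hA', rfl⟩
    have h1 := sums_rewrite γ M A' hA' α β
    have h2 : 0 ≤ ∑ i, ∑ j, (-(M i j - α i - β j) * A' i j + γ/2 * (A' i j)^2
        + (1/(2*γ)) * max (M i j - α i - β j) 0 ^2) :=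
      Finset.sum_nonneg fun i _ => Finset.sum_nonneg fun j _ =>
        entry_ineq γ hγ _ _ (hA'.1 i j)
    rw [h1] at h2
    rw [hv_def] at *
    linarith
  · rintro t ⟨α', β', rfl⟩
    have h1 := sums_rewrite γ M A hA α' β'
    have h2 : 0 ≤ ∑ i, ∑ j, (-(M i j - α' i - β' j) * A i j + γ/2 * (A i j)^2
        + (1/(2*γ)) * max (M i j - α' i - β' j) 0 ^2) :=
      Finset.sum_nonneg fun i _ => Finset.sum_nonneg fun j _ =>
        entry_ineq γ hγ _ _ (hA.1 i j)
    rw [h1] at h2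
    linarith
end

section
/- If (α, β) ∈ ℝⁿ × ℝⁿ are such that A := (1/γ)[M − α1ᵀ − 1βᵀ]₊ is doubly stochastic, then A is the unique minimizer of ⟨−M, A⟩ + (γ/2)‖A‖_F² over A ∈ Ω_n. -/
/-- If dual variables `(α, β)` yield a doubly stochastic `A = (1/γ)[M - α1ᵀ - 1βᵀ]₊`,
then `A` is the unique minimizer of the regularized projection problem. -/
theorem dual_certificate_optimal (n : ℕ) (γ : ℝ) (hγ : 0 < γ)
    (M : Matrix (Fin n) (Fin n) ℝ) (α β : Fin n → ℝ)
    (A : Matrix (Fin n) (Fin n) ℝ)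
    (hA : ∀ i j, A i j = (1/γ) * max (M i j - α i - β j) 0)
    (hDS : IsDoublyStochastic A) :
    ∀ B, IsDoublyStochastic B →
      ((∑ i, ∑ j, (-(M i j)) * A i j) + (γ/2) * ∑ i, ∑ j, (A i j)^2 ≤
        (∑ i, ∑ j, (-(M i j)) * B i j) + (γ/2) * ∑ i, ∑ j, (B i j)^2) ∧
      (((∑ i, ∑ j, (-(M i j)) * B i j) + (γ/2) * ∑ i, ∑ j, (B i j)^2 ≤
        (∑ i, ∑ j, (-(M i j)) * A i j) + (γ/2) * ∑ i, ∑ j, (A i j)^2) → B = A) := by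
  intro B hB
  obtain ⟨hA0, hAr, hAc⟩ := hDS
  obtain ⟨hB0, hBr, hBc⟩ := hB
  have hgA : ∀ i j, γ * A i j = max (M i j - α i - β j) 0 := by
    intro i j
    rw [hA i j]
    field_simp
  -- slack variable
  set s : Fin n → Fin n → ℝ := fun i j => γ * A i j - M i j + α i + β j with hs
  have hs0 : ∀ i j, 0 ≤ s i j := by
    intro i j
    have h := hgA i j
    have := le_max_left (M i j - α i - β j) (0 : ℝ)
    simp only [hs]
    linarith
  have hsA : ∀ i j, s i j * A i j = 0 := by
    intro i j
    rcases le_or_gt (M i j - α i - β j) 0 with h | h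
    · have hz : A i j = 0 := by rw [hA i j, max_eq_right h, mul_zero]
      simp [hz]
    · have hz : γ * A i j = M i j - α i - β j := by rw [hgA i j, max_eq_left h.le]
      simp only [hs]
      nlinarith
  -- the linear dual part sums to zero
  have hzero : ∑ i, ∑ j, (α i + β j) * (B i j - A i j) = 0 := by
    have e : ∀ i j, (α i + β j) * (B i j - A i j)
        = (α i * B i j - α i * A i j) + (β j * B i j - β j * A i j) := by
      intro i j; ring
    simp only [e, Finset.sum_add_distrib, Finset.sum_sub_distrib]
    rw [Finset.sum_comm (f := fun i j => β j * B i j),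
        Finset.sum_comm (f := fun i j => β j * A i j)]
    simp only [← Finset.mul_sum, hAr, hAc, hBr, hBc]
    ring
  -- key inequality: ⟨γA - M, B - A⟩ ≥ 0
  have key : 0 ≤ ∑ i, ∑ j, (γ * A i j - M i j) * (B i j - A i j) := by
    have e : ∀ i j, (γ * A i j - M i j) * (B i j - A i j)
        = s i j * B i j - s i j * A i j - (α i + β j) * (B i j - A i j) := by
      intro i j; simp only [hs]; ring
    simp only [e, Finset.sum_sub_distrib]
    rw [hzero]
    have h1 : 0 ≤ ∑ i, ∑ j, s i j * B i j :=
      Finset.sum_nonneg fun i _ => Finset.sum_nonneg fun j _ =>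
        mul_nonneg (hs0 i j) (hB0 i j)
    have h2 : ∑ i, ∑ j, s i j * A i j = 0 :=
      Finset.sum_eq_zero fun i _ => Finset.sum_eq_zero fun j _ => hsA i j
    linarith
  -- the key algebraic identity
  have main : ((∑ i, ∑ j, (-(M i j)) * B i j) + (γ/2) * ∑ i, ∑ j, (B i j)^2)
      - ((∑ i, ∑ j, (-(M i j)) * A i j) + (γ/2) * ∑ i, ∑ j, (A i j)^2)
      = (∑ i, ∑ j, (γ * A i j - M i j) * (B i j - A i j))
        + (γ/2) * ∑ i, ∑ j, (B i j - A i j)^2 := by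
    simp only [Finset.mul_sum, ← Finset.sum_add_distrib, ← Finset.sum_sub_distrib]
    exact Finset.sum_congr rfl fun i _ => Finset.sum_congr rfl fun j _ => by ring
  have hsq : 0 ≤ ∑ i, ∑ j, (B i j - A i j)^2 :=
    Finset.sum_nonneg fun i _ => Finset.sum_nonneg fun j _ => sq_nonneg _
  constructor
  · nlinarith
  · intro hle
    have hS : ∑ i, ∑ j, (B i j - A i j)^2 = 0 := by nlinarith
    have h1 : ∀ i ∈ Finset.univ, ∑ j, (B i j - A i j)^2 = 0 := by
      rw [← Finset.sum_eq_zero_iff_of_nonneg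
        (fun i _ => Finset.sum_nonneg fun j _ => sq_nonneg _)]
      exact hS
    ext i j
    have h2 := (Finset.sum_eq_zero_iff_of_nonneg
      (fun j _ => sq_nonneg (B i j - A i j))).mp (h1 i (Finset.mem_univ i)) j
      (Finset.mem_univ j)
    have := sq_eq_zero_iff.mp h2
    linarith
end
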